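/- Let G be a finite abelian group and f, g : G → G. Then the differential uniformity of g + f satisfies δ_{g+f} ≤ δ_f · (V(g)² - V(g) + 1). -/

import Mathlib

open Finset

variable {G : Type*}

/-- Number of distinct values of `g`. -/
def V [Fintype G] [DecidableEq G] (g : G → G) : ℕ := (univ.image g).card

/-- Permutation resemblance of `f`. -/
noncomputable def pres [Fintype G] [DecidableEq G] [AddGroup G] (f : G → G) : ℕ :=
  sInf {n | ∃ g : G → G, Function.Bijective (fun x => g x + f x) ∧ V g = n}

/-- Uniformity of `f`: the maximal number of preimages of a point. -/
def uf [Fintype G] [DecidableEq G] (f : G → G) : ℕ :=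
  univ.sup fun b => (univ.filter fun x => f x = b).card

/-- `M f r`: number of elements with exactly `r` preimages under `f`. -/
def M [Fintype G] [DecidableEq G] (f : G → G) (r : ℕ) : ℕ :=
  (univ.filter fun b => (univ.filter fun x => f x = b).card = r).card

/-- `N f s`: number of `s`-tuples of pairwise distinct elements on which `f` is constant. -/
noncomputable def N [Fintype G] (f : G → G) (s : ℕ) : ℕ :=
  Nat.card {t : Fin s → G // Function.Injective t ∧ ∀ i j, f (t i) = f (t j)}

/-- Differential uniformity of  on an additive group. -/
def du [Fintype G] [DecidableEq G] [AddGroup G] (f : G → G) : ℕ :=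
  Finset.sup (((univ : Finset G).erase 0) ×ˢ (univ : Finset G))
    fun ab => (univ.filter fun x => f (x + ab.1) - f x = ab.2).card

theorem stmt_13 [Fintype G] [DecidableEq G] [AddCommGroup G] (f g : G → G) :
    du (fun x => g x + f x) ≤ du f * (V g ^ 2 - V g + 1) := by
  apply Finset.sup_le
  rintro ⟨a, b⟩ hab
  simp only [Finset.mem_product, Finset.mem_erase, Finset.mem_univ, and_true] at hab
  set S : Finset G := univ.image g with hS
  set D : Finset G := (S ×ˢ S).image (fun p => p.1 - p.2) with hDdef
  have hDcard : D.card ≤ V g ^ 2 - V g + 1 := by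
    have hsub : D ⊆ insert (0 : G)
        (((S ×ˢ S).filter (fun p => ¬ p.1 = p.2)).image (fun p => p.1 - p.2)) := by
      intro c hc
      obtain ⟨p, hp, rfl⟩ := Finset.mem_image.1 hc
      by_cases hpe : p.1 = p.2
      · simp [hpe]
      · exact Finset.mem_insert_of_mem (Finset.mem_image.2 ⟨p, Finset.mem_filter.2 ⟨hp, hpe⟩, rfl⟩)
    have hdiag : S.card ≤ ((S ×ˢ S).filter (fun p => p.1 = p.2)).card := by
      apply Finset.card_le_card_of_injOn (fun s => (s, s))
      · intro s hs
        simp [Finset.mem_filter, Finset.mem_product, Finset.mem_coe.1 hs]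
      · intro x _ y _ h
        exact congrArg Prod.fst h
    have hne : ((S ×ˢ S).filter (fun p => ¬ p.1 = p.2)).card ≤ V g ^ 2 - V g := by
      have h1 := Finset.card_filter_add_card_filter_not
        (s := S ×ˢ S) (p := fun p => p.1 = p.2)
      have h2 : (S ×ˢ S).card = V g ^ 2 := by
        simp [Finset.card_product, V, hS, sq]
      have hVle : V g ≤ V g ^ 2 := Nat.le_self_pow two_ne_zero _
      have hVS : S.card = V g := rfl
      omega
    calc D.card ≤ _ := Finset.card_le_card hsub
      _ ≤ (((S ×ˢ S).filter (fun p => ¬ p.1 = p.2)).image (fun p => p.1 - p.2)).card + 1 :=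
          Finset.card_insert_le _ _
      _ ≤ ((S ×ˢ S).filter (fun p => ¬ p.1 = p.2)).card + 1 :=
          Nat.add_le_add_right (Finset.card_image_le) 1
      _ ≤ V g ^ 2 - V g + 1 := Nat.add_le_add_right hne 1
  show (univ.filter fun x => (g (x + a) + f (x + a)) - (g x + f x) = b).card ≤ _
  calc (univ.filter fun x => (g (x + a) + f (x + a)) - (g x + f x) = b).card
      ≤ (D.biUnion fun c => univ.filter fun x =>
          g (x + a) - g x = c ∧ f (x + a) - f x = b - c).card := by
        apply Finset.card_le_card
        intro x hx
        simp only [Finset.mem_filter, Finset.mem_univ, true_and] at hx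
        refine Finset.mem_biUnion.2 ⟨g (x + a) - g x, ?_, ?_⟩
        · exact Finset.mem_image.2 ⟨(g (x + a), g x),
            Finset.mem_product.2 ⟨Finset.mem_image_of_mem g (Finset.mem_univ _),
              Finset.mem_image_of_mem g (Finset.mem_univ _)⟩, rfl⟩
        · refine Finset.mem_filter.2 ⟨Finset.mem_univ _, rfl, ?_⟩
          rw [← hx]; abel
    _ ≤ ∑ c ∈ D, (univ.filter fun x =>
          g (x + a) - g x = c ∧ f (x + a) - f x = b - c).card := Finset.card_biUnion_le
    _ ≤ ∑ c ∈ D, du f := by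
        apply Finset.sum_le_sum
        intro c _
        calc (univ.filter fun x => g (x + a) - g x = c ∧ f (x + a) - f x = b - c).card
            ≤ (univ.filter fun x => f (x + a) - f x = b - c).card := by
              apply Finset.card_le_card
              intro x hx
              simp only [Finset.mem_filter, Finset.mem_univ, true_and] at hx ⊢
              exact hx.2
          _ ≤ du f := by
              apply Finset.le_sup (f := fun ab : G × G =>
                (univ.filter fun x => f (x + ab.1) - f x = ab.2).card)
                (b := (a, b - c))
              simp [hab]
    _ = D.card * du f := by rw [Finset.sum_const, smul_eq_mul]
    _ ≤ (V g ^ 2 - V g + 1) * du f := Nat.mul_le_mul_right _ hDcard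
    _ = du f * (V g ^ 2 - V g + 1) := mul_comm _ _
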